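/- Hardy-type estimate for a dilation difference: Let T̂ = {(ξ,η) : 0 < η < ξ < 1}, β ∈ (0,1), and u ∈ H¹(T̂). Then ∫_{T̂} ξ^{−2} (u(ξ, βη) − u(βξ, βη))² dξ dη ≤ C ∫_{T̂} |∂₁u(ξ,η)|² dξ dη for a constant C depending only on β. -/

import Mathlib

open MeasureTheory Set
open scoped ENNReal

/-- The reference triangle `T̂ = {(ξ,η) : 0 < η < ξ < 1}`. -/
def refTriangle : Set (ℝ × ℝ) := {p | 0 < p.1 ∧ p.1 < 1 ∧ 0 < p.2 ∧ p.2 < p.1}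


lemma isOpen_refTriangle : IsOpen refTriangle := by
  have : refTriangle = ({p : ℝ × ℝ | 0 < p.1} ∩ {p | p.1 < 1}) ∩
      ({p | 0 < p.2} ∩ {p | p.2 < p.1}) := by
    ext p; simp only [refTriangle, Set.mem_setOf_eq, Set.mem_inter_iff]; tauto
  rw [this]
  exact (((isOpen_lt continuous_const continuous_fst).inter
      (isOpen_lt continuous_fst continuous_const)).inter
    ((isOpen_lt continuous_const continuous_snd).inter
      (isOpen_lt continuous_snd continuous_fst)))

lemma sq_lintegral_le {α : Type*} [MeasurableSpace α] (μ : Measure α) (f : α → ℝ≥0∞)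
    (hf : AEMeasurable f μ) : (∫⁻ a, f a ∂μ) ^ 2 ≤ (∫⁻ a, f a ^ 2 ∂μ) * μ Set.univ := by
  have hpq : Real.HolderConjugate 2 2 := Real.HolderConjugate.two_two
  have h := ENNReal.lintegral_mul_le_Lp_mul_Lq μ hpq hf (aemeasurable_const (b := (1:ℝ≥0∞)))
  simp only [Pi.mul_apply, mul_one, ENNReal.one_rpow, lintegral_const, one_mul] at h
  calc (∫⁻ a, f a ∂μ) ^ 2 ≤ ((∫⁻ a, f a ^ (2:ℝ) ∂μ) ^ (1/(2:ℝ)) * (μ Set.univ) ^ (1/(2:ℝ))) ^ 2 := by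
        gcongr
    _ = (∫⁻ a, f a ^ 2 ∂μ) * μ Set.univ := by
        rw [mul_pow, ← ENNReal.rpow_natCast (_ ^ _) 2, ← ENNReal.rpow_natCast (_ ^ _) 2,
          ← ENNReal.rpow_mul, ← ENNReal.rpow_mul]
        norm_num

lemma key_pointwise (β : ℝ) (hβ0 : 0 < β) (hβ1 : β < 1) (u : ℝ × ℝ → ℝ)
    (hu : ContDiffOn ℝ 1 u refTriangle) (p : ℝ × ℝ) (hp : p ∈ refTriangle) :
    ENNReal.ofReal ((p.1 ^ 2)⁻¹ * (u (p.1, β * p.2) - u (β * p.1, β * p.2)) ^ 2)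
      ≤ ∫⁻ t in Set.Ioc (β * p.1) p.1,
          ENNReal.ofReal ((1 - β) / t * (fderiv ℝ u (t, β * p.2) (1, 0)) ^ 2) := by
  obtain ⟨hx0, hx1, hy0, hyx⟩ := hp
  set ξ := p.1
  set c := β * p.2 with hc
  have hβξ : β * ξ < ξ := by nlinarith
  have hβξ0 : 0 < β * ξ := by positivity
  -- membership of the segment in the triangle
  have hmem : ∀ t ∈ Set.Icc (β * ξ) ξ, (t, c) ∈ refTriangle := by
    rintro t ⟨ht1, ht2⟩
    refine ⟨lt_of_lt_of_le hβξ0 ht1, lt_of_le_of_lt ht2 hx1, by positivity, ?_⟩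
    calc c = β * p.2 := rfl
      _ < β * ξ := by nlinarith
      _ ≤ t := ht1
  -- the partial derivative function
  set φ : ℝ → ℝ := fun t => fderiv ℝ u (t, c) (1, 0) with hφ
  have hdiff : ∀ t ∈ Set.Icc (β * ξ) ξ, DifferentiableAt ℝ u (t, c) := fun t ht =>
    (hu.differentiableOn one_ne_zero).differentiableAt
      (isOpen_refTriangle.mem_nhds (hmem t ht))
  have hderiv : ∀ t ∈ Set.uIcc (β * ξ) ξ, HasDerivAt (fun t => u (t, c)) (φ t) t := by
    intro t ht
    rw [Set.uIcc_of_le hβξ.le] at ht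
    have h1 : HasDerivAt (fun t : ℝ => (t, c)) ((1:ℝ), (0:ℝ)) t :=
      (hasDerivAt_id t).prodMk (hasDerivAt_const t c)
    exact ((hdiff t ht).hasFDerivAt.comp_hasDerivAt t h1)
  have hcontφ : ContinuousOn φ (Set.Icc (β * ξ) ξ) := by
    have h1 : ContinuousOn (fderiv ℝ u) refTriangle :=
      hu.continuousOn_fderiv_of_isOpen isOpen_refTriangle le_rfl
    have h2 : ContinuousOn (fun t : ℝ => (t, c)) (Set.Icc (β * ξ) ξ) :=
      (continuous_id.prodMk continuous_const).continuousOn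
    exact ((ContinuousLinearMap.apply ℝ ℝ ((1:ℝ),(0:ℝ))).continuous.comp_continuousOn
      (h1.comp h2 hmem))
  have hint : IntervalIntegrable φ volume (β * ξ) ξ := by
    apply hcontφ.intervalIntegrable_of_Icc hβξ.le
  have hftc : u (ξ, c) - u (β * ξ, c) = ∫ t in (β * ξ)..ξ, φ t :=
    (intervalIntegral.integral_eq_sub_of_hasDerivAt hderiv hint).symm
  set μ := volume.restrict (Set.Ioc (β * ξ) ξ) with hμ
  have hφcont' : ContinuousOn φ (Set.Ioc (β * ξ) ξ) := hcontφ.mono Set.Ioc_subset_Icc_self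
  have hφm : AEMeasurable (fun t => ENNReal.ofReal |φ t|) μ :=
    ((ENNReal.continuous_ofReal.comp continuous_abs).comp_continuousOn hφcont').aemeasurable
      measurableSet_Ioc
  have habs : |(u (ξ, c) - u (β * ξ, c))| ≤ ∫ t in Set.Ioc (β * ξ) ξ, |φ t| := by
    rw [hftc, intervalIntegral.integral_of_le hβξ.le]
    simpa using norm_integral_le_integral_norm (μ := μ) φ
  have hintabs : Integrable (fun t => |φ t|) μ := hint.1.abs
  have h2 : ENNReal.ofReal |(u (ξ, c) - u (β * ξ, c))| ≤ ∫⁻ t, ENNReal.ofReal |φ t| ∂μ := by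
    rw [← ofReal_integral_eq_lintegral_ofReal hintabs (ae_of_all _ fun t => abs_nonneg _)]
    exact ENNReal.ofReal_le_ofReal habs
  have hCS := sq_lintegral_le μ _ hφm
  have hμuniv : μ Set.univ = ENNReal.ofReal ((1 - β) * ξ) := by
    rw [hμ, Measure.restrict_apply MeasurableSet.univ, Set.univ_inter, Real.volume_Ioc]
    ring_nf
  have hsq : ∀ t, ENNReal.ofReal |φ t| ^ 2 = ENNReal.ofReal (φ t ^ 2) := fun t => by
    rw [← ENNReal.ofReal_pow (abs_nonneg _), sq_abs]
  have h5 : ENNReal.ofReal ((ξ ^ 2)⁻¹ * (u (ξ, c) - u (β * ξ, c)) ^ 2)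
      ≤ ENNReal.ofReal ((1 - β) / ξ) * ∫⁻ t, ENNReal.ofReal (φ t ^ 2) ∂μ := by
    have e1 : ENNReal.ofReal ((ξ ^ 2)⁻¹ * (u (ξ, c) - u (β * ξ, c)) ^ 2)
        = ENNReal.ofReal ((ξ ^ 2)⁻¹) * ENNReal.ofReal |(u (ξ, c) - u (β * ξ, c))| ^ 2 := by
      rw [ENNReal.ofReal_mul (by positivity), ← ENNReal.ofReal_pow (abs_nonneg _), sq_abs]
    rw [e1]
    calc ENNReal.ofReal ((ξ ^ 2)⁻¹) * ENNReal.ofReal |(u (ξ, c) - u (β * ξ, c))| ^ 2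
        ≤ ENNReal.ofReal ((ξ ^ 2)⁻¹) *
            ((∫⁻ t, ENNReal.ofReal (φ t ^ 2) ∂μ) * ENNReal.ofReal ((1 - β) * ξ)) := by
          gcongr
          calc ENNReal.ofReal |(u (ξ, c) - u (β * ξ, c))| ^ 2 ≤ (∫⁻ t, ENNReal.ofReal |φ t| ∂μ) ^ 2 := by gcongr
            _ ≤ (∫⁻ t, ENNReal.ofReal |φ t| ^ 2 ∂μ) * μ Set.univ := hCS
            _ = (∫⁻ t, ENNReal.ofReal (φ t ^ 2) ∂μ) * ENNReal.ofReal ((1 - β) * ξ) := by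
                rw [hμuniv]; congr 1; exact lintegral_congr fun t => hsq t
      _ = ENNReal.ofReal ((1 - β) / ξ) * ∫⁻ t, ENNReal.ofReal (φ t ^ 2) ∂μ := by
          rw [← mul_comm (ENNReal.ofReal ((1-β)*ξ)) _, ← mul_assoc,
            ← ENNReal.ofReal_mul (by positivity)]
          congr 2
          field_simp
  calc ENNReal.ofReal ((ξ ^ 2)⁻¹ * (u (ξ, c) - u (β * ξ, c)) ^ 2)
      ≤ ENNReal.ofReal ((1 - β) / ξ) * ∫⁻ t, ENNReal.ofReal (φ t ^ 2) ∂μ := h5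
    _ = ∫⁻ t, ENNReal.ofReal ((1 - β) / ξ * φ t ^ 2) ∂μ := by
        rw [← lintegral_const_mul' _ _ ENNReal.ofReal_ne_top]
        exact lintegral_congr fun t =>
          (ENNReal.ofReal_mul (div_nonneg (by linarith) hx0.le)).symm
    _ ≤ ∫⁻ t, ENNReal.ofReal ((1 - β) / t * φ t ^ 2) ∂μ := by
        refine lintegral_mono_ae ((ae_restrict_iff' measurableSet_Ioc).2
          (ae_of_all _ fun t ht => ?_))
        apply ENNReal.ofReal_le_ofReal
        have ht0 : 0 < t := lt_trans hβξ0 ht.1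
        have hdd : (1 - β) / ξ ≤ (1 - β) / t :=
          div_le_div_of_nonneg_left (by linarith) ht0 ht.2
        exact mul_le_mul_of_nonneg_right hdd (sq_nonneg _)

lemma main_aux (β : ℝ) (hβ0 : 0 < β) (hβ1 : β < 1) (u : ℝ × ℝ → ℝ)
    (hu : ContDiffOn ℝ 1 u refTriangle) :
    (∫⁻ p in refTriangle,
        ENNReal.ofReal ((p.1 ^ 2)⁻¹ * (u (p.1, β * p.2) - u (β * p.1, β * p.2)) ^ 2))
      ≤ ENNReal.ofReal ((1 - β) ^ 2 / β ^ 2) *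
          ∫⁻ p in refTriangle, ENNReal.ofReal ((fderiv ℝ u p (1, 0)) ^ 2) := by
  -- the squared partial derivative, as an `ℝ≥0∞`-valued function
  set G : ℝ × ℝ → ℝ≥0∞ := fun q => ENNReal.ofReal ((fderiv ℝ u q (1, 0)) ^ 2) with hGdef
  have hGm : Measurable G :=
    ENNReal.measurable_ofReal.comp ((measurable_fderiv_apply_const ℝ u _).pow_const 2)
  -- the product-space kernel
  set S : Set ((ℝ × ℝ) × ℝ) :=
    {q | q.1 ∈ refTriangle ∧ q.2 ∈ Set.Ioc (β * q.1.1) q.1.1} with hSdef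
  have hSm : MeasurableSet S := by
    have h1 : MeasurableSet {q : (ℝ × ℝ) × ℝ | q.1 ∈ refTriangle} :=
      isOpen_refTriangle.measurableSet.preimage measurable_fst
    have h2 : MeasurableSet {q : (ℝ × ℝ) × ℝ | β * q.1.1 < q.2} :=
      measurableSet_lt (measurable_fst.fst.const_mul β) measurable_snd
    have h3 : MeasurableSet {q : (ℝ × ℝ) × ℝ | q.2 ≤ q.1.1} :=
      measurableSet_le measurable_snd measurable_fst.fst
    have hSeq : S = {q : (ℝ × ℝ) × ℝ | q.1 ∈ refTriangle} ∩
        ({q | β * q.1.1 < q.2} ∩ {q | q.2 ≤ q.1.1}) := rfl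
    rw [hSeq]; exact h1.inter (h2.inter h3)
  set K : (ℝ × ℝ) × ℝ → ℝ≥0∞ := fun q =>
    S.indicator (fun q => ENNReal.ofReal ((1 - β) / q.2) * G (q.2, β * q.1.2)) q with hKdef
  have hKm : Measurable K := by
    apply Measurable.indicator _ hSm
    exact (ENNReal.measurable_ofReal.comp (measurable_snd.inv.const_mul (1 - β))).mul
      (hGm.comp (measurable_snd.prodMk (measurable_fst.snd.const_mul β)))
  -- Step 1: pointwise estimate
  have step1 : (∫⁻ p in refTriangle,
        ENNReal.ofReal ((p.1 ^ 2)⁻¹ * (u (p.1, β * p.2) - u (β * p.1, β * p.2)) ^ 2))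
      ≤ ∫⁻ p in refTriangle, ∫⁻ t in Set.Ioc (β * p.1) p.1,
          ENNReal.ofReal ((1 - β) / t * (fderiv ℝ u (t, β * p.2) (1, 0)) ^ 2) := by
    refine lintegral_mono_ae ((ae_restrict_iff' isOpen_refTriangle.measurableSet).2
      (ae_of_all _ fun p hp => ?_))
    exact key_pointwise β hβ0 hβ1 u hu p hp
  -- Step 2: rewrite as a double integral of the kernel
  have step2 : (∫⁻ p in refTriangle, ∫⁻ t in Set.Ioc (β * p.1) p.1,
        ENNReal.ofReal ((1 - β) / t * (fderiv ℝ u (t, β * p.2) (1, 0)) ^ 2))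
      = ∫⁻ p, ∫⁻ t, K (p, t) := by
    rw [← lintegral_indicator isOpen_refTriangle.measurableSet]
    refine lintegral_congr fun p => ?_
    by_cases hp : p ∈ refTriangle
    · rw [Set.indicator_of_mem hp]
      have heq : ∀ t, K (p, t) = (Set.Ioc (β * p.1) p.1).indicator
          (fun t => ENNReal.ofReal ((1 - β) / t) * G (t, β * p.2)) t := by
        intro t
        have hmem : (p, t) ∈ S ↔ t ∈ Set.Ioc (β * p.1) p.1 :=
          ⟨fun h => h.2, fun h => ⟨hp, h⟩⟩
        by_cases ht : t ∈ Set.Ioc (β * p.1) p.1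
        · rw [Set.indicator_of_mem ht]
          exact Set.indicator_of_mem (hmem.mpr ht) _
        · rw [Set.indicator_of_notMem ht]
          exact Set.indicator_of_notMem (fun h => ht (hmem.mp h)) _
      simp_rw [heq]
      rw [lintegral_indicator measurableSet_Ioc]
      refine setLIntegral_congr_fun measurableSet_Ioc (fun t ht => ?_)
      have ht0 : 0 < t := lt_trans (mul_pos hβ0 hp.1) ht.1
      rw [hGdef, ← ENNReal.ofReal_mul (div_nonneg (by linarith) ht0.le)]
    · rw [Set.indicator_of_notMem hp]
      have hz : ∀ t : ℝ, K (p, t) = 0 := fun t =>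
        Set.indicator_of_notMem (fun h => hp h.1) _
      simp [hz]
  -- the target region and integrand
  set T2 : Set (ℝ × ℝ) := {q | 0 < q.2 ∧ q.2 < q.1 ∧ q.1 < 1} with hT2def
  have hT2m : MeasurableSet T2 := by
    have h1 : MeasurableSet {q : ℝ × ℝ | 0 < q.2} := measurableSet_lt measurable_const measurable_snd
    have h2 : MeasurableSet {q : ℝ × ℝ | q.2 < q.1} := measurableSet_lt measurable_snd measurable_fst
    have h3 : MeasurableSet {q : ℝ × ℝ | q.1 < 1} := measurableSet_lt measurable_fst measurable_const
    have : T2 = {q : ℝ × ℝ | 0 < q.2} ∩ ({q | q.2 < q.1} ∩ {q | q.1 < 1}) := rfl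
    rw [this]; exact h1.inter (h2.inter h3)
  have hT2eq : T2 = refTriangle := by
    ext q
    constructor
    · rintro ⟨h1, h2, h3⟩; exact ⟨lt_trans h1 h2, h3, h1, h2⟩
    · rintro ⟨h1, h2, h3, h4⟩; exact ⟨h3, h4, h2⟩
  set Φ : ℝ × ℝ → ℝ≥0∞ := fun q => T2.indicator G q with hΦdef
  have hΦm : Measurable Φ := hGm.indicator hT2m
  -- Step 4: estimate the inner integral for fixed t
  have step4 : ∀ t : ℝ, (∫⁻ p : ℝ × ℝ, K (p, t))
      ≤ ENNReal.ofReal ((1 - β) ^ 2 / β) * ∫⁻ η : ℝ, Φ (t, β * η) := by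
    intro t
    have hmeas : AEMeasurable (fun p : ℝ × ℝ => K (p, t))
        (((volume : Measure ℝ)).prod (volume : Measure ℝ)) :=
      (hKm.comp measurable_prodMk_right).aemeasurable
    have hconst : ENNReal.ofReal ((1 - β) / t) * ENNReal.ofReal (t / β - t)
        ≤ ENNReal.ofReal ((1 - β) ^ 2 / β) := by
      rcases le_or_gt t 0 with hle | hpos
      · have : (1 - β) / t ≤ 0 := div_nonpos_iff.mpr (Or.inl ⟨by linarith, hle⟩)
        rw [ENNReal.ofReal_of_nonpos this, zero_mul]
        exact zero_le
      · rw [← ENNReal.ofReal_mul (div_nonneg (by linarith) hpos.le)]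
        apply ENNReal.ofReal_le_ofReal
        have : (1 - β) / t * (t / β - t) = (1 - β) ^ 2 / β := by
          field_simp
        rw [this]
    calc (∫⁻ p : ℝ × ℝ, K (p, t)) = ∫⁻ η, ∫⁻ ξ, K ((ξ, η), t) :=
          lintegral_prod_symm _ hmeas
      _ ≤ ∫⁻ η, ENNReal.ofReal ((1 - β) ^ 2 / β) * Φ (t, β * η) := by
          refine lintegral_mono fun η => ?_
          calc (∫⁻ ξ, K ((ξ, η), t))
              ≤ ∫⁻ ξ, (Set.Ico t (t / β)).indicator
                  (fun _ => ENNReal.ofReal ((1 - β) / t) * Φ (t, β * η)) ξ := by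
                refine lintegral_mono fun ξ => ?_
                by_cases hK : ((ξ, η), t) ∈ S
                · have hpT := hK.1
                  have htI := hK.2
                  obtain ⟨hξ0, hξ1, hη0, hηξ⟩ := id hpT
                  have h1 : ξ ∈ Set.Ico t (t / β) := by
                    refine ⟨htI.2, ?_⟩
                    rw [lt_div_iff₀ hβ0]
                    calc ξ * β = β * ξ := mul_comm _ _
                      _ < t := htI.1
                  have h2 : (t, β * η) ∈ T2 := by
                    refine ⟨mul_pos hβ0 hη0, ?_, lt_of_le_of_lt htI.2 hξ1⟩
                    calc β * η < β * ξ := by nlinarith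
                      _ < t := htI.1
                  rw [Set.indicator_of_mem h1,
                    show K ((ξ, η), t) = ENNReal.ofReal ((1 - β) / t) * G (t, β * η) from
                      Set.indicator_of_mem hK _,
                    show Φ (t, β * η) = G (t, β * η) from Set.indicator_of_mem h2 _]
                · rw [show K ((ξ, η), t) = 0 from Set.indicator_of_notMem hK _]
                  exact zero_le
            _ = ENNReal.ofReal ((1 - β) / t) * Φ (t, β * η) * volume (Set.Ico t (t / β)) := by
                rw [lintegral_indicator measurableSet_Ico, setLIntegral_const]
            _ ≤ ENNReal.ofReal ((1 - β) ^ 2 / β) * Φ (t, β * η) := by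
                rw [Real.volume_Ico, mul_right_comm]
                exact mul_le_mul_left hconst _
      _ = ENNReal.ofReal ((1 - β) ^ 2 / β) * ∫⁻ η, Φ (t, β * η) :=
          lintegral_const_mul' _ _ ENNReal.ofReal_ne_top
  -- Step 5: scaling in the second variable
  have step5 : ∀ t : ℝ, (∫⁻ η : ℝ, Φ (t, β * η))
      = ENNReal.ofReal β⁻¹ * ∫⁻ x : ℝ, Φ (t, x) := by
    intro t
    have hf : Measurable (fun x => Φ (t, x)) := hΦm.comp measurable_prodMk_left
    have h := lintegral_map (μ := (volume : Measure ℝ)) hf (measurable_const_mul β)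
    rw [Real.map_volume_mul_left (ne_of_gt hβ0), lintegral_smul_measure] at h
    rw [← h, abs_of_pos (inv_pos.2 hβ0), smul_eq_mul]
  -- Step 6: recombining
  have step6 : (∫⁻ t : ℝ, ∫⁻ x : ℝ, Φ (t, x)) = ∫⁻ p in refTriangle, G p := by
    have h := lintegral_prod (μ := (volume : Measure ℝ)) (ν := (volume : Measure ℝ)) Φ hΦm.aemeasurable
    rw [← h]
    show (∫⁻ q : ℝ × ℝ, T2.indicator G q) = _
    rw [lintegral_indicator hT2m, hT2eq]
  -- Assemble everything
  calc (∫⁻ p in refTriangle,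
        ENNReal.ofReal ((p.1 ^ 2)⁻¹ * (u (p.1, β * p.2) - u (β * p.1, β * p.2)) ^ 2))
      ≤ ∫⁻ p in refTriangle, ∫⁻ t in Set.Ioc (β * p.1) p.1,
          ENNReal.ofReal ((1 - β) / t * (fderiv ℝ u (t, β * p.2) (1, 0)) ^ 2) := step1
    _ = ∫⁻ p, ∫⁻ t, K (p, t) := step2
    _ = ∫⁻ t, ∫⁻ p, K (p, t) := lintegral_lintegral_swap hKm.aemeasurable
    _ ≤ ∫⁻ t, ENNReal.ofReal ((1 - β) ^ 2 / β) * (ENNReal.ofReal β⁻¹ * ∫⁻ x, Φ (t, x)) := by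
        refine lintegral_mono fun t => ?_
        rw [← step5 t]
        exact step4 t
    _ = ENNReal.ofReal ((1 - β) ^ 2 / β) * ENNReal.ofReal β⁻¹ * ∫⁻ t, ∫⁻ x, Φ (t, x) := by
        simp_rw [← mul_assoc]
        exact lintegral_const_mul' _ _
          (ENNReal.mul_ne_top ENNReal.ofReal_ne_top ENNReal.ofReal_ne_top)
    _ = ENNReal.ofReal ((1 - β) ^ 2 / β ^ 2) * ∫⁻ p in refTriangle, G p := by
        rw [step6, ← ENNReal.ofReal_mul (by positivity)]
        have : (1 - β) ^ 2 / β * β⁻¹ = (1 - β) ^ 2 / β ^ 2 := by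
          rw [div_eq_mul_inv, div_eq_mul_inv, mul_assoc, ← mul_inv, ← sq]
        rw [this]

/-- Hardy-type estimate for a dilation difference: for `β ∈ (0,1)` there is `C = C(β)` with
`∫_{T̂} ξ⁻² (u(ξ,βη) - u(βξ,βη))² dξ dη ≤ C ∫_{T̂} |∂₁u|²` for all `u ∈ H¹(T̂)`. -/
theorem hardy_dilation_difference (β : ℝ) (hβ : β ∈ Set.Ioo (0:ℝ) 1) :
    ∃ C : ℝ, 0 < C ∧
      ∀ u : ℝ × ℝ → ℝ, ContDiffOn ℝ 1 u refTriangle →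
        (∫⁻ p in refTriangle,
            ENNReal.ofReal ((p.1 ^ 2)⁻¹ * (u (p.1, β * p.2) - u (β * p.1, β * p.2)) ^ 2))
          ≤ ENNReal.ofReal C *
            ∫⁻ p in refTriangle,
              ENNReal.ofReal ((fderivWithin ℝ u refTriangle p (1, 0)) ^ 2) := by
  obtain ⟨hβ0, hβ1⟩ := hβ
  refine ⟨(1 - β) ^ 2 / β ^ 2, div_pos (pow_pos (by linarith) 2) (pow_pos hβ0 2), ?_⟩
  intro u hu
  have hcongr : (∫⁻ p in refTriangle,
        ENNReal.ofReal ((fderivWithin ℝ u refTriangle p (1, 0)) ^ 2))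
      = ∫⁻ p in refTriangle, ENNReal.ofReal ((fderiv ℝ u p (1, 0)) ^ 2) :=
    setLIntegral_congr_fun isOpen_refTriangle.measurableSet (fun p hp => by
      rw [fderivWithin_of_isOpen isOpen_refTriangle hp])
  rw [hcongr]
  exact main_aux β hβ0 hβ1 u hu
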